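/- Let M be a compact connected manifold, m₁ a Borel probability measure on M absolutely continuous with respect to Lebesgue measure, and f : M → M a local homeomorphism of degree p = deg(f) such that (f, M, m₁) is non-singular (m₁(A) = 0 implies m₁(f⁻¹(A)) = 0). Then there exists a finite family of pairwise disjoint open sets P₁, …, P_p covering M up to an m₁-null set, such that f restricted to each Pᵢ is a homeomorphism onto its image and m₁(M \ f(Pᵢ)) = 0 for every i = 1, …, p. -/
import Mathlib


open MeasureTheory Metric Set

lemma evenCover {M : Type*} [MetricSpace M] [CompactSpace M]
    (f : M → M) (hf : IsLocalHomeomorph f) (p : ℕ) (hp : 0 < p)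
    (hdeg : ∀ x : M, Nat.card (f ⁻¹' {x}) = p) (x : M) :
    ∃ (U : Set M) (W : Fin p → Set M), IsOpen U ∧ x ∈ U ∧ (∀ i, IsOpen (W i)) ∧
      Pairwise (Function.onFun Disjoint W) ∧ (f ⁻¹' U ⊆ ⋃ i, W i) ∧
      ∀ i, Set.InjOn f (W i) ∧ U ⊆ f '' W i := by
  classical
  have hfin : Nat.card (f ⁻¹' {x}) ≠ 0 := by rw [hdeg]; omega
  let e : (f ⁻¹' {x}) ≃ Fin p :=
    (Nat.equivFinOfCardPos hfin).trans (finCongr (hdeg x))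
  set y : Fin p → M := fun i => ((e.symm i : f ⁻¹' {x}) : M) with hy
  have hyx : ∀ i, f (y i) = x := fun i => (e.symm i).2
  have hyinj : Function.Injective y :=
    Subtype.coe_injective.comp e.symm.injective
  choose g hg₁ hg₂ using fun i => hf (y i)
  -- disjoint neighborhoods
  set O : Fin p → Set M :=
    fun i => ⋂ j ∈ Finset.univ.erase i, ball (y i) (dist (y i) (y j) / 2) with hO
  have hOopen : ∀ i, IsOpen (O i) := fun i =>
    isOpen_biInter_finset fun j _ => isOpen_ball
  have hyO : ∀ i, y i ∈ O i := by
    intro i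
    refine Set.mem_iInter₂.2 fun j hj => ?_
    have hne : y i ≠ y j := fun h => (Finset.mem_erase.1 hj).1 (hyinj h).symm
    simp [dist_pos.2 hne]
  have hOdisj : ∀ i j, i ≠ j → Disjoint (O i) (O j) := by
    intro i j hij
    rw [Set.disjoint_left]
    intro z hzi hzj
    have h1 : z ∈ ball (y i) (dist (y i) (y j) / 2) :=
      Set.mem_iInter₂.1 hzi j (Finset.mem_erase.2 ⟨hij.symm, Finset.mem_univ _⟩)
    have h2 : z ∈ ball (y j) (dist (y j) (y i) / 2) :=
      Set.mem_iInter₂.1 hzj i (Finset.mem_erase.2 ⟨hij, Finset.mem_univ _⟩)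
    have t := dist_triangle (y i) z (y j)
    rw [mem_ball, dist_comm] at h1
    rw [mem_ball, dist_comm (y j) (y i)] at h2
    linarith
  set S : Fin p → Set M := fun i => (g i).source ∩ O i with hS
  have hSopen : ∀ i, IsOpen (S i) := fun i => (g i).open_source.inter (hOopen i)
  have hySm : ∀ i, y i ∈ S i := fun i => ⟨hg₁ i, hyO i⟩
  have hSdisj : ∀ i j, i ≠ j → Disjoint (S i) (S j) := fun i j hij =>
    ((hOdisj i j hij).mono (Set.inter_subset_right) (Set.inter_subset_right))
  have hSinj : ∀ i, Set.InjOn f (S i) := by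
    intro i
    rw [hg₂ i]
    exact (g i).injOn.mono Set.inter_subset_left
  -- the compact complement
  set K : Set M := (⋃ i, S i)ᶜ with hK
  have hKc : IsCompact K :=
    ((isOpen_iUnion hSopen).isClosed_compl).isCompact
  have hfKclosed : IsClosed (f '' K) := (hKc.image hf.continuous).isClosed
  set U : Set M := (⋂ i, f '' S i) ∩ (f '' K)ᶜ with hU
  have hUopen : IsOpen U :=
    (isOpen_iInter_of_finite fun i => hf.isOpenMap _ (hSopen i)).inter
      hfKclosed.isOpen_compl
  have hxU : x ∈ U := by
    constructor
    · exact Set.mem_iInter.2 fun i => ⟨y i, hySm i, hyx i⟩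
    · rintro ⟨k, hkK, hkx⟩
      have hk : k ∈ f ⁻¹' {x} := hkx
      have : k = y (e ⟨k, hk⟩) := by simp [hy, y]
      exact hkK (this ▸ Set.mem_iUnion.2 ⟨e ⟨k, hk⟩, hySm _⟩)
  refine ⟨U, fun i => S i ∩ f ⁻¹' U, hUopen, hxU,
    fun i => (hSopen i).inter (hUopen.preimage hf.continuous), ?_, ?_, ?_⟩
  · exact fun i j hij =>
      (hSdisj i j hij).mono Set.inter_subset_left Set.inter_subset_left
  · intro z hz
    have hzK : z ∉ K := fun hzK => hz.2 ⟨z, hzK, rfl⟩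
    obtain ⟨i, hi⟩ := Set.mem_iUnion.1 (not_not.1 hzK)
    exact Set.mem_iUnion.2 ⟨i, hi, hz⟩
  · intro i
    refine ⟨(hSinj i).mono Set.inter_subset_left, ?_⟩
    intro u hu
    obtain ⟨z, hzS, hzu⟩ := Set.mem_iInter.1 hu.1 i
    exact ⟨z, ⟨hzS, by rw [Set.mem_preimage, hzu]; exact hu⟩, hzu⟩


/-- Lemma 2.3: if `f` is a local homeomorphism of degree `p` of a compact
connected manifold `M`, and `(f, M, m₁)` is non-singular with `m₁` a Borel probability
absolutely continuous with respect to Lebesgue (a reference measure `leb`), then there are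
pairwise disjoint open sets `P 1, …, P p` covering `M` up to an `m₁`-null set such that `f`
restricted to each `P i` is a homeomorphism onto its (open) image and
`m₁ (M \ f '' P i) = 0` for every `i`. -/
theorem stmt11 {M : Type*} [MetricSpace M] [CompactSpace M] [ConnectedSpace M] [Nonempty M]
    [MeasurableSpace M] [BorelSpace M]
    (leb m₁ : Measure M) [IsProbabilityMeasure m₁] (hac : m₁ ≪ leb)
    (f : M → M) (hf : IsLocalHomeomorph f)
    (p : ℕ) (hp : 0 < p) (hdeg : ∀ x : M, Nat.card (f ⁻¹' {x}) = p)
    (hns : ∀ A : Set M, MeasurableSet A → m₁ A = 0 → m₁ (f ⁻¹' A) = 0) :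
    ∃ P : Fin p → Set M,
      (∀ i, IsOpen (P i)) ∧
      Pairwise (Function.onFun Disjoint P) ∧
      m₁ (Set.univ \ ⋃ i, P i) = 0 ∧
      ∀ i, Set.InjOn f (P i) ∧ IsOpen (f '' P i) ∧ m₁ (Set.univ \ f '' P i) = 0 := by
  classical
  choose U W hUopen hxU hWopen hWdisj hWcover hWprop using
    fun x : M => evenCover f hf p hp hdeg x
  -- choose radii with null frontier, ball inside U x
  have hrad : ∀ x : M, ∃ r : ℝ, 0 < r ∧ ball x r ⊆ U x ∧ m₁ (frontier (ball x r)) = 0 := by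
    intro x
    obtain ⟨ε, hε, hsub⟩ := Metric.isOpen_iff.1 (hUopen x) x (hxU x)
    obtain ⟨r, hr, hnull⟩ := exists_null_frontier_thickening m₁ ({x} : Set M) hε
    rw [Metric.thickening_singleton] at hnull
    exact ⟨r, hr.1, (ball_subset_ball hr.2.le).trans hsub, hnull⟩
  choose r hrpos hrsub hrnull using hrad
  -- finite subcover by such balls
  have hcov : (Set.univ : Set M) ⊆ ⋃ x : M, ball x (r x) :=
    fun z _ => Set.mem_iUnion.2 ⟨z, mem_ball_self (hrpos z)⟩
  obtain ⟨t, ht⟩ := isCompact_univ.elim_finite_subcover (fun x => ball x (r x))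
    (fun x => isOpen_ball) hcov
  set n := t.card with hn
  set φ : Fin n → M := fun j => ((t.equivFin.symm j : t) : M) with hφ
  set B : Fin n → Set M := fun j => ball (φ j) (r (φ j)) with hB
  have hBopen : ∀ j, IsOpen (B j) := fun _ => isOpen_ball
  have hcov' : (Set.univ : Set M) ⊆ ⋃ j, B j := by
    intro z hz
    obtain ⟨x, hxt, hzx⟩ := Set.mem_iUnion₂.1 (ht hz)
    refine Set.mem_iUnion.2 ⟨t.equivFin ⟨x, hxt⟩, ?_⟩
    have hφx : φ (t.equivFin ⟨x, hxt⟩) = x := by simp [hφ]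
    show z ∈ ball (φ _) (r (φ _))
    rw [hφx]; exact hzx
  -- disjointified version
  set A : Fin n → Set M := fun j => B j \ closure (⋃ l, ⋃ (_ : l < j), B l) with hA
  have hAopen : ∀ j, IsOpen (A j) := fun j => (hBopen j).sdiff isClosed_closure
  have hAB : ∀ j, A j ⊆ B j := fun j => Set.diff_subset
  have hABdisj : ∀ l j, l < j → Disjoint (A j) (B l) := by
    intro l j hlj
    rw [Set.disjoint_left]
    intro z hzA hzB
    exact hzA.2 (subset_closure (Set.mem_iUnion₂.2 ⟨l, hlj, hzB⟩))
  have hApair : Pairwise (Function.onFun Disjoint A) := by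
    intro l j hlj
    rcases lt_or_gt_of_ne hlj with h | h
    · exact ((hABdisj l j h).mono_right (hAB l)).symm
    · exact (hABdisj j l h).mono_right (hAB j)
  set G : Set M := ⋃ j, A j with hG
  have hGopen : IsOpen G := isOpen_iUnion hAopen
  have hGnull : m₁ Gᶜ = 0 := by
    have hsub : Gᶜ ⊆ ⋃ j, frontier (B j) := by
      intro z hz
      have hz' : z ∈ ⋃ j, B j := hcov' (Set.mem_univ z)
      set s : Finset (Fin n) := Finset.univ.filter (fun j => z ∈ B j) with hs
      have hsne : s.Nonempty := by
        obtain ⟨j, hj⟩ := Set.mem_iUnion.1 hz'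
        exact ⟨j, Finset.mem_filter.2 ⟨Finset.mem_univ _, hj⟩⟩
      set j₀ := s.min' hsne with hj₀
      have hj₀B : z ∈ B j₀ := (Finset.mem_filter.1 (s.min'_mem hsne)).2
      have hzA : z ∉ A j₀ := fun h => hz (Set.mem_iUnion.2 ⟨j₀, h⟩)
      have hzc : z ∈ closure (⋃ l, ⋃ (_ : l < j₀), B l) := by
        by_contra h
        exact hzA ⟨hj₀B, h⟩
      have hfin : ({l : Fin n | l < j₀}).Finite := Set.toFinite _
      rw [show (⋃ l, ⋃ (_ : l < j₀), B l) = ⋃ l ∈ {l : Fin n | l < j₀}, B l from rfl,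
        hfin.closure_biUnion] at hzc
      obtain ⟨l, hl, hzl⟩ := Set.mem_iUnion₂.1 hzc
      have hzBl : z ∉ B l := by
        intro hzB
        have : j₀ ≤ l := s.min'_le l (Finset.mem_filter.2 ⟨Finset.mem_univ _, hzB⟩)
        exact absurd hl (not_lt.2 this)
      refine Set.mem_iUnion.2 ⟨l, ?_⟩
      rw [frontier, (hBopen l).interior_eq]
      exact ⟨hzl, hzBl⟩
    refine measure_mono_null hsub (measure_iUnion_null fun j => hrnull (φ j))
  -- key image computation
  have hWimg : ∀ (j : Fin n) (i : Fin p), f '' (W (φ j) i ∩ f ⁻¹' (A j)) = A j := by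
    intro j i
    apply Set.Subset.antisymm
    · rintro u ⟨z, ⟨_, hz2⟩, rfl⟩; exact hz2
    · intro u hu
      obtain ⟨z, hzW, rfl⟩ := (hWprop (φ j) i).2 (hrsub (φ j) (hAB j hu))
      exact ⟨z, ⟨hzW, hu⟩, rfl⟩
  refine ⟨fun i => ⋃ j, W (φ j) i ∩ f ⁻¹' (A j), ?_, ?_, ?_, ?_⟩
  · exact fun i => isOpen_iUnion fun j =>
      (hWopen (φ j) i).inter ((hAopen j).preimage hf.continuous)
  · intro i i' hii'
    rw [Function.onFun, Set.disjoint_left]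
    rintro z hz hz'
    obtain ⟨j, hzW, hzA⟩ := Set.mem_iUnion.1 hz
    obtain ⟨j', hzW', hzA'⟩ := Set.mem_iUnion.1 hz'
    have hjj' : j = j' := by
      by_contra h
      exact Set.disjoint_left.1 (hApair h) hzA hzA'
    subst hjj'
    exact Set.disjoint_left.1 (hWdisj (φ j) hii') hzW hzW'
  · have hsub : Set.univ \ (⋃ i, ⋃ j, W (φ j) i ∩ f ⁻¹' (A j)) ⊆ f ⁻¹' Gᶜ := by
      rintro z ⟨-, hz⟩
      intro hfz
      obtain ⟨j, hfzA⟩ := Set.mem_iUnion.1 hfz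
      have hzU : z ∈ f ⁻¹' (U (φ j)) := hrsub (φ j) (hAB j hfzA)
      obtain ⟨i, hzW⟩ := Set.mem_iUnion.1 (hWcover (φ j) hzU)
      exact hz (Set.mem_iUnion.2 ⟨i, Set.mem_iUnion.2 ⟨j, hzW, hfzA⟩⟩)
    exact measure_mono_null hsub (hns _ hGopen.measurableSet.compl hGnull)
  · intro i
    have himg : f '' (⋃ j, W (φ j) i ∩ f ⁻¹' (A j)) = G := by
      rw [Set.image_iUnion]
      exact Set.iUnion_congr fun j => hWimg j i
    refine ⟨?_, by rw [himg]; exact hGopen, by rw [himg, ← Set.compl_eq_univ_diff]; exact hGnull⟩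
    rintro z hz z' hz' hfz
    obtain ⟨j, hzW, hzA⟩ := Set.mem_iUnion.1 hz
    obtain ⟨j', hzW', hzA'⟩ := Set.mem_iUnion.1 hz'
    have hjj' : j = j' := by
      by_contra h
      rw [Set.mem_preimage] at hzA hzA'
      rw [hfz] at hzA
      exact Set.disjoint_left.1 (hApair h) hzA hzA'
    subst hjj'
    exact (hWprop (φ j) i).1 hzW hzW' hfz
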